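/- arXiv:0809.0853 — 8 statements merged into one kernel-verified Lean document; each statement's English description precedes it below -/
import Mathlib

section
/- Equality in the variational lower bound D_φ(P,Q) ≥ ∫ f dQ − ∫ φ*(f) dP is attained by any measurable function f with f(x) ∈ ∂φ(q₀(x)/p₀(x)) for μ-almost every x, where ∂φ denotes the subdifferential of φ. -/
open MeasureTheory Real
open scoped ENNReal NNReal

/-- Equality in the variational lower bound `D_φ(P,Q) ≥ ∫ f dQ − ∫ φ*(f) dP` is attained
by any measurable `f` with `f x ∈ ∂φ(q₀ x / p₀ x)` for μ-almost every `x`. -/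
theorem fdivergence_variational_equality_subdifferential
    {X : Type*} [MeasurableSpace X] (μ : Measure X) [SigmaFinite μ]
    (P Q : Measure X) [IsProbabilityMeasure P] [IsProbabilityMeasure Q]
    (p q : X → ℝ) (hpmeas : Measurable p) (hqmeas : Measurable q)
    (hppos : ∀ᵐ x ∂μ, 0 < p x) (hq : ∀ x, 0 ≤ q x)
    (hP : P = μ.withDensity (fun x => ENNReal.ofReal (p x)))
    (hQ : Q = μ.withDensity (fun x => ENNReal.ofReal (q x)))
    (φ : ℝ → ℝ) (hφ : ConvexOn ℝ Set.univ φ) (hlsc : LowerSemicontinuous φ)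
    (φstar : ℝ → ℝ) (hφstar : φstar = fun v => ⨆ u : ℝ, u * v - φ u)
    (f : X → ℝ) (hf : Measurable f)
    (hBdd : ∀ x, BddAbove (Set.range fun u : ℝ => u * f x - φ u))
    -- `f x` lies in the subdifferential of `φ` at `q x / p x`, μ-a.e.
    (hsub : ∀ᵐ x ∂μ, ∀ s : ℝ, φ (q x / p x) + f x * (s - q x / p x) ≤ φ s)
    (h1 : Integrable (fun x => p x * φ (q x / p x)) μ)
    (h2 : Integrable f Q)
    (h3 : Integrable (fun x => φstar (f x)) P) :
    ∫ x, p x * φ (q x / p x) ∂μ = ∫ x, f x ∂Q - ∫ x, φstar (f x) ∂P := by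
  subst hP hQ hφstar
  have hqm : Measurable fun x => (q x).toNNReal := hqmeas.real_toNNReal
  have hpm : Measurable fun x => (p x).toNNReal := hpmeas.real_toNNReal
  have hQd : (fun x => ENNReal.ofReal (q x)) = fun x => ((q x).toNNReal : ℝ≥0∞) := rfl
  have hPd : (fun x => ENNReal.ofReal (p x)) = fun x => ((p x).toNNReal : ℝ≥0∞) := rfl
  -- rewrite the two integrals with densities
  have hIQ : ∫ x, f x ∂(μ.withDensity fun x => ENNReal.ofReal (q x))
      = ∫ x, q x * f x ∂μ := by
    rw [hQd, integral_withDensity_eq_integral_smul hqm]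
    refine integral_congr_ae (Filter.Eventually.of_forall fun x => ?_)
    simp [NNReal.smul_def, Real.coe_toNNReal _ (hq x)]
  have hIP : ∫ x, (⨆ u : ℝ, u * f x - φ u) ∂(μ.withDensity fun x => ENNReal.ofReal (p x))
      = ∫ x, p x * (⨆ u : ℝ, u * f x - φ u) ∂μ := by
    rw [hPd, integral_withDensity_eq_integral_smul hpm]
    refine integral_congr_ae ?_
    filter_upwards [hppos] with x hp
    simp [NNReal.smul_def, Real.coe_toNNReal _ hp.le]
  -- the conjugate is attained at q/p
  have hkey : ∀ᵐ x ∂μ, p x * (⨆ u : ℝ, u * f x - φ u)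
      = q x * f x - p x * φ (q x / p x) := by
    filter_upwards [hppos, hsub] with x hp hs
    have hsup : (⨆ u : ℝ, u * f x - φ u) = (q x / p x) * f x - φ (q x / p x) := by
      apply le_antisymm
      · refine ciSup_le fun u => ?_
        have := hs u
        nlinarith
      · exact le_ciSup (hBdd x) (q x / p x)
    rw [hsup]
    field_simp
  have hintcongr : ∫ x, p x * (⨆ u : ℝ, u * f x - φ u) ∂μ
      = ∫ x, (q x * f x - p x * φ (q x / p x)) ∂μ := integral_congr_ae hkey
  -- integrability of q * f
  have hIqf : Integrable (fun x => q x * f x) μ := by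
    have := (integrable_withDensity_iff_integrable_smul hqm (g := f)).1 (hQd ▸ h2)
    refine this.congr (Filter.Eventually.of_forall fun x => ?_)
    simp [NNReal.smul_def, Real.coe_toNNReal _ (hq x)]
  rw [hIQ, hIP, hintcongr, integral_sub hIqf h1]
  ring
end

section
/- For probability measures P and Q with densities p₀, q₀ having common support, the Kullback–Leibler divergence admits the variational representation D_K(P,Q) = sup over measurable g > 0 of ∫ log g dP − ∫ g dQ + 1, with the supremum attained at g₀ = p₀/q₀. -/
open MeasureTheory Real ENNReal

/-- Variational representation of the KL divergence:
`D_K(P,Q) = sup_{g > 0} (∫ log g dP − ∫ g dQ + 1)`, with the supremum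
attained at `g₀ = p₀/q₀`. -/
theorem kl_variational_representation
    {X : Type*} [MeasurableSpace X] (μ : Measure X) [SigmaFinite μ]
    (P Q : Measure X) [IsProbabilityMeasure P] [IsProbabilityMeasure Q]
    (p q : X → ℝ) (hpmeas : Measurable p) (hqmeas : Measurable q)
    (hpq : ∀ᵐ x ∂μ, 0 < p x ∧ 0 < q x)  -- common support
    (hP : P = μ.withDensity (fun x => ENNReal.ofReal (p x)))
    (hQ : Q = μ.withDensity (fun x => ENNReal.ofReal (q x)))
    (hD : Integrable (fun x => Real.log (p x / q x)) P)
    (hg0Q : Integrable (fun x => p x / q x) Q) :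
    -- every positive measurable g gives a lower bound on D_K(P,Q) …
    (∀ g : X → ℝ, Measurable g → (∀ x, 0 < g x) →
      Integrable (fun x => Real.log (g x)) P → Integrable g Q →
      ∫ x, Real.log (g x) ∂P - ∫ x, g x ∂Q + 1 ≤ ∫ x, Real.log (p x / q x) ∂P) ∧
    -- … and the supremum is attained at g₀ = p₀/q₀
    (∫ x, Real.log (p x / q x) ∂P - ∫ x, p x / q x ∂Q + 1
      = ∫ x, Real.log (p x / q x) ∂P) := by
  have hp0 : ∀ᵐ x ∂μ, 0 < p x := hpq.mono fun x h => h.1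
  have hq0 : ∀ᵐ x ∂μ, 0 < q x := hpq.mono fun x h => h.2
  -- integral against a withDensity measure
  have key : ∀ (r : X → ℝ), Measurable r → (∀ᵐ x ∂μ, 0 ≤ r x) → ∀ (f : X → ℝ),
      ∫ x, f x ∂(μ.withDensity fun x => ENNReal.ofReal (r x)) = ∫ x, r x * f x ∂μ := by
    intro r hr hr0 f
    rw [show (fun x => ENNReal.ofReal (r x)) = fun x => ((r x).toNNReal : ℝ≥0∞) from rfl,
      integral_withDensity_eq_integral_smul hr.real_toNNReal f]
    refine integral_congr_ae (hr0.mono fun x hx => ?_)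
    simp [NNReal.smul_def, Real.coe_toNNReal _ hx]
  have hPint : ∀ f : X → ℝ, ∫ x, f x ∂P = ∫ x, p x * f x ∂μ := fun f => by
    rw [hP]; exact key p hpmeas (hp0.mono fun x h => h.le) f
  have hQint : ∀ f : X → ℝ, ∫ x, f x ∂Q = ∫ x, q x * f x ∂μ := fun f => by
    rw [hQ]; exact key q hqmeas (hq0.mono fun x h => h.le) f
  -- ∫ p dμ = 1
  have hlintp : ∫⁻ x, ENNReal.ofReal (p x) ∂μ = 1 := by
    have : P Set.univ = 1 := measure_univ
    rwa [hP, withDensity_apply _ MeasurableSet.univ, Measure.restrict_univ] at this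
  have hintp1 : ∫ x, p x ∂μ = 1 := by
    rw [integral_eq_lintegral_of_nonneg_ae (hp0.mono fun x h => h.le)
      hpmeas.aestronglyMeasurable, hlintp]
    simp
  have Ip : Integrable p μ := by
    refine ⟨hpmeas.aestronglyMeasurable, ?_⟩
    rw [HasFiniteIntegral]
    have : ∫⁻ x, (‖p x‖₊ : ℝ≥0∞) ∂μ = ∫⁻ x, ENNReal.ofReal (p x) ∂μ := by
      refine lintegral_congr_ae (hp0.mono fun x hx => ?_)
      show (‖p x‖₊ : ℝ≥0∞) = ENNReal.ofReal (p x)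
      rw [← enorm_eq_nnnorm, ← ofReal_norm, Real.norm_of_nonneg hx.le]
    change ∫⁻ x, (‖p x‖₊ : ℝ≥0∞) ∂μ < ∞
    rw [this, hlintp]; exact one_lt_top
  constructor
  · intro g hgmeas hgpos hglogP hgQ
    -- transfer integrability to μ
    have hplt : ∀ᵐ x ∂μ, ENNReal.ofReal (p x) < ⊤ := Filter.Eventually.of_forall fun _ => ofReal_lt_top
    have hqlt : ∀ᵐ x ∂μ, ENNReal.ofReal (q x) < ⊤ := Filter.Eventually.of_forall fun _ => ofReal_lt_top
    have I1 : Integrable (fun x => p x * Real.log (g x)) μ := by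
      rw [hP] at hglogP
      rw [integrable_withDensity_iff (hpmeas.ennreal_ofReal) hplt] at hglogP
      exact hglogP.congr (hp0.mono fun x hx => by
        simp [ENNReal.toReal_ofReal hx.le, mul_comm])
    have I2 : Integrable (fun x => q x * g x) μ := by
      rw [hQ] at hgQ
      rw [integrable_withDensity_iff (hqmeas.ennreal_ofReal) hqlt] at hgQ
      exact hgQ.congr (hq0.mono fun x hx => by
        simp [ENNReal.toReal_ofReal hx.le, mul_comm])
    have I3 : Integrable (fun x => p x * Real.log (p x / q x)) μ := by
      rw [hP] at hD
      rw [integrable_withDensity_iff (hpmeas.ennreal_ofReal) hplt] at hD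
      exact hD.congr (hp0.mono fun x hx => by
        simp [ENNReal.toReal_ofReal hx.le, mul_comm])
    -- pointwise inequality
    have hae : ∀ᵐ x ∂μ, p x * Real.log (g x) - p x * Real.log (p x / q x)
        ≤ q x * g x - p x := by
      refine hpq.mono fun x ⟨hp, hq⟩ => ?_
      have hg := hgpos x
      have h1 : Real.log (g x) - Real.log (p x / q x)
          = Real.log (g x * q x / p x) := by
        rw [← Real.log_div hg.ne' (div_pos hp hq).ne']
        congr 1; field_simp
      have h2 : Real.log (g x * q x / p x) ≤ g x * q x / p x - 1 :=
        Real.log_le_sub_one_of_pos (by positivity)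
      have h3 : p x * (g x * q x / p x) = g x * q x := by field_simp
      nlinarith [mul_le_mul_of_nonneg_left (h1 ▸ h2) hp.le]
    have hmono : ∫ x, (p x * Real.log (g x) - p x * Real.log (p x / q x)) ∂μ
        ≤ ∫ x, (q x * g x - p x) ∂μ :=
      integral_mono_ae (I1.sub I3) (I2.sub Ip) hae
    rw [integral_sub I1 I3, integral_sub I2 Ip, hintp1] at hmono
    rw [hPint, hPint, hQint]
    linarith
  · have h1 : ∫ x, p x / q x ∂Q = 1 := by
      rw [hQint]
      rw [show ∫ x, q x * (p x / q x) ∂μ = ∫ x, p x ∂μ from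
        integral_congr_ae (hq0.mono fun x hx => by field_simp), hintp1]
    rw [h1]; ring
end

section
/- Let P, Q be probability measures with g₀ = dP/dQ, and for a positive Q-integrable measurable function g define d(g₀, g) := ∫ (g − g₀) dQ − ∫ log(g/g₀) dP. Then d(g₀, g) ≥ ∫ (√g − √g₀)² dQ = 2 h_Q²(g₀, g), where h_Q²(g₀,g) := (1/2) ∫ (√g₀ − √g)² dQ. -/
open MeasureTheory Real

/-- With `g₀ = dP/dQ`, the Bregman-type distance
`d(g₀,g) = ∫ (g − g₀) dQ − ∫ log(g/g₀) dP` dominates the squared Hellinger distance: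
`d(g₀,g) ≥ ∫ (√g − √g₀)² dQ = 2 h_Q²(g₀,g)`. -/
theorem bregman_ge_squared_hellinger
    {X : Type*} [MeasurableSpace X] (Q : Measure X) [IsProbabilityMeasure Q]
    (g0 g : X → ℝ) (hg0pos : ∀ x, 0 < g0 x) (hgpos : ∀ x, 0 < g x)
    (hg0m : Measurable g0) (hgm : Measurable g)
    (P : Measure X) (hP : P = Q.withDensity (fun x => ENNReal.ofReal (g0 x)))
    [IsProbabilityMeasure P]
    (hint1 : Integrable g Q) (hint2 : Integrable g0 Q)
    (hint3 : Integrable (fun x => Real.log (g x / g0 x)) P)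
    (hint4 : Integrable (fun x => (Real.sqrt (g x) - Real.sqrt (g0 x)) ^ 2) Q) :
    (∫ x, (g x - g0 x) ∂Q - ∫ x, Real.log (g x / g0 x) ∂P
      ≥ ∫ x, (Real.sqrt (g x) - Real.sqrt (g0 x)) ^ 2 ∂Q) ∧
    (∫ x, (Real.sqrt (g x) - Real.sqrt (g0 x)) ^ 2 ∂Q
      = 2 * ((1 / 2) * ∫ x, (Real.sqrt (g0 x) - Real.sqrt (g x)) ^ 2 ∂Q)) := by
  have hmeas : Measurable fun x => (g0 x).toNNReal := hg0m.real_toNNReal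
  -- square root product identity
  have hsq : ∀ x, Real.sqrt (g x) * Real.sqrt (g0 x)
      = (g x + g0 x - (Real.sqrt (g x) - Real.sqrt (g0 x)) ^ 2) / 2 := by
    intro x
    have h1 : Real.sqrt (g x) ^ 2 = g x := Real.sq_sqrt (hgpos x).le
    have h2 : Real.sqrt (g0 x) ^ 2 = g0 x := Real.sq_sqrt (hg0pos x).le
    nlinarith [h1, h2]
  have I_s : Integrable (fun x => Real.sqrt (g x) * Real.sqrt (g0 x)) Q := by
    apply (((hint1.add hint2).sub hint4).div_const 2).congr
    simp only [Pi.add_apply, Pi.sub_apply]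
    filter_upwards with x
    rw [hsq x]
  -- change of measure
  have hPint : ∫ x, Real.log (g x / g0 x) ∂P
      = ∫ x, g0 x * Real.log (g x / g0 x) ∂Q := by
    rw [hP, show (fun x => ENNReal.ofReal (g0 x))
        = (fun x => (((fun y => (g0 y).toNNReal) x : NNReal) : ENNReal)) from rfl,
      integral_withDensity_eq_integral_smul hmeas]
    congr 1; ext x
    simp [NNReal.smul_def, Real.coe_toNNReal _ (hg0pos x).le]
  have hint3' : Integrable (fun x => g0 x * Real.log (g x / g0 x)) Q := by
    rw [hP, show (fun x => ENNReal.ofReal (g0 x))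
        = (fun x => (((fun y => (g0 y).toNNReal) x : NNReal) : ENNReal)) from rfl,
      integrable_withDensity_iff_integrable_smul hmeas] at hint3
    apply hint3.congr
    filter_upwards with x
    simp [NNReal.smul_def, Real.coe_toNNReal _ (hg0pos x).le]
  -- pointwise inequality
  have hpt : ∀ x, g0 x * Real.log (g x / g0 x)
      ≤ 2 * (Real.sqrt (g x) * Real.sqrt (g0 x)) - 2 * g0 x := by
    intro x
    have ha := hgpos x; have hb := hg0pos x
    have hq : 0 < g x / g0 x := div_pos ha hb
    have hlog : Real.log (g x / g0 x) ≤ 2 * (Real.sqrt (g x / g0 x) - 1) := by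
      have h1 : Real.log (Real.sqrt (g x / g0 x)) ≤ Real.sqrt (g x / g0 x) - 1 :=
        Real.log_le_sub_one_of_pos (Real.sqrt_pos.mpr hq)
      have h2 : Real.log (Real.sqrt (g x / g0 x)) = Real.log (g x / g0 x) / 2 :=
        Real.log_sqrt hq.le
      linarith
    have hkey : Real.sqrt (g x / g0 x) * g0 x = Real.sqrt (g x) * Real.sqrt (g0 x) := by
      rw [Real.sqrt_div ha.le]
      rw [show g0 x = Real.sqrt (g0 x) * Real.sqrt (g0 x) from
        (Real.mul_self_sqrt hb.le).symm]
      have hsb : Real.sqrt (g0 x) ≠ 0 := (Real.sqrt_pos.mpr hb).ne'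
      field_simp
      rw [Real.sqrt_sq (Real.sqrt_nonneg _)]
    have := mul_le_mul_of_nonneg_left hlog hb.le
    nlinarith [hkey]
  have I_rhs : Integrable
      (fun x => 2 * (Real.sqrt (g x) * Real.sqrt (g0 x)) - 2 * g0 x) Q :=
    (I_s.const_mul 2).sub (hint2.const_mul 2)
  have hmono : ∫ x, g0 x * Real.log (g x / g0 x) ∂Q
      ≤ ∫ x, (2 * (Real.sqrt (g x) * Real.sqrt (g0 x)) - 2 * g0 x) ∂Q :=
    integral_mono hint3' I_rhs hpt
  have hsplit1 : ∫ x, (2 * (Real.sqrt (g x) * Real.sqrt (g0 x)) - 2 * g0 x) ∂Q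
      = 2 * (∫ x, Real.sqrt (g x) * Real.sqrt (g0 x) ∂Q) - 2 * ∫ x, g0 x ∂Q := by
    rw [integral_sub (I_s.const_mul 2) (hint2.const_mul 2), integral_const_mul,
      integral_const_mul]
  have hsplit2 : ∫ x, (Real.sqrt (g x) - Real.sqrt (g0 x)) ^ 2 ∂Q
      = ∫ x, g x ∂Q + ∫ x, g0 x ∂Q
        - 2 * ∫ x, Real.sqrt (g x) * Real.sqrt (g0 x) ∂Q := by
    have : ∫ x, (Real.sqrt (g x) - Real.sqrt (g0 x)) ^ 2 ∂Q
        = ∫ x, (g x + g0 x - 2 * (Real.sqrt (g x) * Real.sqrt (g0 x))) ∂Q := by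
      apply integral_congr_ae
      filter_upwards with x
      rw [hsq x]; ring
    have hadd : Integrable (fun x => g x + g0 x) Q := hint1.add hint2
    rw [this, integral_sub hadd (I_s.const_mul 2),
      integral_add hint1 hint2, integral_const_mul]
  have hsub : ∫ x, (g x - g0 x) ∂Q = ∫ x, g x ∂Q - ∫ x, g0 x ∂Q :=
    integral_sub hint1 hint2
  constructor
  · rw [hPint, hsub, hsplit2]
    linarith [hmono, hsplit1]
  · have : ∫ x, (Real.sqrt (g x) - Real.sqrt (g0 x)) ^ 2 ∂Q
        = ∫ x, (Real.sqrt (g0 x) - Real.sqrt (g x)) ^ 2 ∂Q := by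
      apply integral_congr_ae
      filter_upwards with x
      ring
    rw [this]; ring
end

section
/- Let ĝₙ be the maximizer over a class G of g ↦ ∫ log g dPₙ − ∫ g dQₙ, where g₀ = dP/dQ ∈ G. Then d(g₀, ĝₙ) ≤ sup_{g ∈ G} |∫ log(g/g₀) d(Pₙ − P) − ∫ (g − g₀) d(Qₙ − Q)|, where d(g₀,g) := ∫(g−g₀) dQ − ∫ log(g/g₀) dP. -/
open MeasureTheory Real

/-- If `ghatₙ` maximizes `g ↦ ∫ log g dPₙ − ∫ g dQₙ` over `G ∋ g₀ = dP/dQ`, then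
`d(g₀, ghatₙ) ≤ sup_{g ∈ G} |∫ log(g/g₀) d(Pₙ−P) − ∫ (g−g₀) d(Qₙ−Q)|`, where
`d(g₀,g) = ∫ (g−g₀) dQ − ∫ log(g/g₀) dP`. -/
theorem estimator_E1_basic_inequality
    {X : Type*} [MeasurableSpace X] (Q : Measure X) [IsProbabilityMeasure Q]
    (g0 : X → ℝ) (hg0m : Measurable g0)
    (P : Measure X) (hP : P = Q.withDensity (fun x => ENNReal.ofReal (g0 x)))
    [IsProbabilityMeasure P]
    (Pn Qn : Measure X) [IsProbabilityMeasure Pn] [IsProbabilityMeasure Qn]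
    (G : Set (X → ℝ)) (hpos : ∀ g ∈ G, ∀ x, 0 < g x) (hg0G : g0 ∈ G)
    (ghat : X → ℝ) (hghatG : ghat ∈ G)
    -- ghat maximizes the empirical objective over G:
    (hopt : ∀ g ∈ G, ∫ x, Real.log (g x) ∂Pn - ∫ x, g x ∂Qn
      ≤ ∫ x, Real.log (ghat x) ∂Pn - ∫ x, ghat x ∂Qn)
    -- the empirical process indexed by G:
    (E : (X → ℝ) → ℝ)
    (hE : E = fun g =>
      |(∫ x, Real.log (g x / g0 x) ∂Pn - ∫ x, Real.log (g x / g0 x) ∂P)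
        - (∫ x, (g x - g0 x) ∂Qn - ∫ x, (g x - g0 x) ∂Q)|)
    (hbdd : BddAbove (Set.range fun g : G => E g))
    -- integrability of the relevant integrands:
    (hint : ∀ g ∈ G, Integrable g Q ∧ Integrable g Qn ∧
      Integrable (fun x => Real.log (g x / g0 x)) P ∧
      Integrable (fun x => Real.log (g x)) Pn) :
    ∫ x, (ghat x - g0 x) ∂Q - ∫ x, Real.log (ghat x / g0 x) ∂P
      ≤ ⨆ g : G, E g := by
  obtain ⟨hQ1, hQn1, hP1, hPn1⟩ := hint ghat hghatG
  obtain ⟨hQ0, hQn0, hP0, hPn0⟩ := hint g0 hg0G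
  have hlog : ∀ x, Real.log (ghat x / g0 x) = Real.log (ghat x) - Real.log (g0 x) :=
    fun x => Real.log_div (ne_of_gt (hpos ghat hghatG x)) (ne_of_gt (hpos g0 hg0G x))
  have hlogPn : ∫ x, Real.log (ghat x / g0 x) ∂Pn
      = ∫ x, Real.log (ghat x) ∂Pn - ∫ x, Real.log (g0 x) ∂Pn := by
    rw [← integral_sub hPn1 hPn0]
    exact integral_congr_ae (Filter.Eventually.of_forall hlog)
  have hsubQn : ∫ x, (ghat x - g0 x) ∂Qn = ∫ x, ghat x ∂Qn - ∫ x, g0 x ∂Qn :=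
    integral_sub hQn1 hQn0
  have hsubQ : ∫ x, (ghat x - g0 x) ∂Q = ∫ x, ghat x ∂Q - ∫ x, g0 x ∂Q :=
    integral_sub hQ1 hQ0
  have hkey : 0 ≤ ∫ x, Real.log (ghat x / g0 x) ∂Pn - ∫ x, (ghat x - g0 x) ∂Qn := by
    have h := hopt g0 hg0G
    rw [hlogPn, hsubQn]
    linarith
  set d := ∫ x, (ghat x - g0 x) ∂Q - ∫ x, Real.log (ghat x / g0 x) ∂P with hd
  have hstep : d ≤ E ghat := by
    have : d ≤ (∫ x, Real.log (ghat x / g0 x) ∂Pn - ∫ x, Real.log (ghat x / g0 x) ∂P)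
        - (∫ x, (ghat x - g0 x) ∂Qn - ∫ x, (ghat x - g0 x) ∂Q) := by
      rw [hd]; linarith
    calc d ≤ _ := this
      _ ≤ E ghat := by rw [hE]; exact le_abs_self _
  have hsup : E ghat ≤ ⨆ g : G, E g :=
    le_ciSup hbdd (⟨ghat, hghatG⟩ : G)
  linarith
end

section
/- Let ĝₙ minimize over a convex class G the penalized objective g ↦ ∫ g dQₙ − ∫ log g dPₙ + (λ/2) I²(g), where I is a norm-like penalty (so that I² is convex) and g₀ = dP/dQ ∈ G. Then (1/4) h_Q²(g₀, ĝₙ) + (λ/2) I²(ĝₙ) ≤ −∫ (ĝₙ − g₀) d(Qₙ − Q) + 2∫ log((ĝₙ + g₀)/(2g₀)) d(Pₙ − P) + (λ/2) I²(g₀). -/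
open MeasureTheory Real
open scoped ENNReal NNReal

lemma key_sq_aux (s r u : ℝ) (hs : 0 ≤ s) (hr : 0 ≤ r) (hu : 0 ≤ u)
    (h2 : 2 * u^2 = s^2 + r^2) : (r - s)^2 ≤ 16 * (u - s)^2 := by
  have hur : u ≤ r + s := by
    nlinarith [sq_nonneg (r + s), mul_nonneg hr hs]
  nlinarith [sq_nonneg ((u-s)*(u+s)), sq_nonneg (u-s), sq_nonneg (r-s), mul_nonneg hu hs,
    mul_nonneg hr hs, sq_nonneg (u+s), sq_nonneg (r+s)]

lemma pt_pop_aux (a b : ℝ) (ha : 0 < a) (hb : 0 < b) :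
    (1/8) * (Real.sqrt a - Real.sqrt b)^2 ≤ (b - a) - 2 * (a * Real.log ((b + a)/(2*a))) := by
  set t : ℝ := (b + a) / (2 * a) with hts
  have ht : 0 < t := by positivity
  have hlt : Real.log t ≤ 2 * (Real.sqrt t - 1) := by
    have h1 : Real.log (Real.sqrt t) ≤ Real.sqrt t - 1 :=
      Real.log_le_sub_one_of_pos (Real.sqrt_pos.mpr ht)
    rw [Real.log_sqrt ht.le] at h1; linarith
  have hsqrt : a * Real.sqrt t = Real.sqrt a * Real.sqrt ((a + b)/2) := by
    have hq : a^2 * t = a * ((a+b)/2) := by field_simp [hts]; rw [hts]; field_simp; ring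
    calc a * Real.sqrt t = Real.sqrt (a^2) * Real.sqrt t := by rw [Real.sqrt_sq ha.le]
      _ = Real.sqrt (a^2 * t) := (Real.sqrt_mul (sq_nonneg a) t).symm
      _ = Real.sqrt (a * ((a+b)/2)) := by rw [hq]
      _ = Real.sqrt a * Real.sqrt ((a+b)/2) := Real.sqrt_mul ha.le _
  have key := key_sq_aux (Real.sqrt a) (Real.sqrt b) (Real.sqrt ((a+b)/2))
    (Real.sqrt_nonneg _) (Real.sqrt_nonneg _) (Real.sqrt_nonneg _)
    (by rw [Real.sq_sqrt ha.le, Real.sq_sqrt hb.le,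
      Real.sq_sqrt (by linarith : (0:ℝ) ≤ (a+b)/2)]; ring)
  have hmul : a * Real.log t ≤ 2 * (a * Real.sqrt t - a) := by
    nlinarith [mul_le_mul_of_nonneg_left hlt ha.le]
  have hu2 : (Real.sqrt ((a+b)/2))^2 = (a+b)/2 := Real.sq_sqrt (by linarith)
  have hs2 : (Real.sqrt a)^2 = a := Real.sq_sqrt ha.le
  have hr2 : (Real.sqrt b)^2 = b := Real.sq_sqrt hb.le
  nlinarith [hmul, hsqrt, key]

lemma pt_emp_aux (a b : ℝ) (ha : 0 < a) (hb : 0 < b) :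
    Real.log b ≤ 2 * Real.log ((b + a)/(2*a)) + Real.log a := by
  have h1 : Real.log (b * a) ≤ Real.log (((b+a)/2)^2) := by
    apply Real.log_le_log (by positivity)
    nlinarith [sq_nonneg (b - a)]
  rw [Real.log_mul hb.ne' ha.ne', Real.log_pow] at h1
  have h2 : Real.log ((b+a)/(2*a)) = Real.log ((b+a)/2) - Real.log a := by
    rw [show (b+a)/(2*a) = ((b+a)/2)/a by ring, Real.log_div (by positivity) ha.ne']
  push_cast at h1
  linarith

/-- Basic inequality for the penalized estimator E2: if `ghat` minimizes
`g ↦ ∫ g dQₙ − ∫ log g dPₙ + (λ/2) I²(g)` over a convex class `G ∋ g₀ = dP/dQ`, then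
`(1/4) h_Q²(g₀, ghat) + (λ/2) I²(ghat)
  ≤ −∫ (ghat−g₀) d(Qₙ−Q) + 2 ∫ log((ghat+g₀)/(2g₀)) d(Pₙ−P) + (λ/2) I²(g₀)`. -/
theorem estimator_E2_basic_inequality
    {X : Type*} [MeasurableSpace X] (Q : Measure X) [IsProbabilityMeasure Q]
    (g0 : X → ℝ) (hg0m : Measurable g0)
    (P : Measure X) (hP : P = Q.withDensity (fun x => ENNReal.ofReal (g0 x)))
    [IsProbabilityMeasure P]
    (Pn Qn : Measure X) [IsProbabilityMeasure Pn] [IsProbabilityMeasure Qn]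
    (G : Set (X → ℝ)) (hGconv : Convex ℝ G)
    (hpos : ∀ g ∈ G, ∀ x, 0 < g x) (hg0G : g0 ∈ G)
    (I : (X → ℝ) → ℝ) (hInonneg : ∀ g, 0 ≤ I g)
    (hI2conv : ConvexOn ℝ G (fun g => (I g) ^ 2))
    (lam : ℝ) (hlam : 0 < lam)
    (ghat : X → ℝ) (hghatG : ghat ∈ G)
    -- ghat minimizes the penalized empirical objective over G:
    (hopt : ∀ g ∈ G,
      ∫ x, ghat x ∂Qn - ∫ x, Real.log (ghat x) ∂Pn + lam / 2 * (I ghat) ^ 2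
        ≤ ∫ x, g x ∂Qn - ∫ x, Real.log (g x) ∂Pn + lam / 2 * (I g) ^ 2)
    -- integrability of the relevant integrands:
    (hint : ∀ g ∈ G, Integrable g Q ∧ Integrable g Qn ∧
      Integrable (fun x => Real.log (g x)) Pn ∧
      Integrable (fun x => Real.log ((g x + g0 x) / (2 * g0 x))) P ∧
      Integrable (fun x => Real.log ((g x + g0 x) / (2 * g0 x))) Pn ∧
      Integrable (fun x => (Real.sqrt (g0 x) - Real.sqrt (g x)) ^ 2) Q) :
    (1 / 4) * ((1 / 2) * ∫ x, (Real.sqrt (g0 x) - Real.sqrt (ghat x)) ^ 2 ∂Q)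
        + lam / 2 * (I ghat) ^ 2
      ≤ -(∫ x, (ghat x - g0 x) ∂Qn - ∫ x, (ghat x - g0 x) ∂Q)
        + 2 * (∫ x, Real.log ((ghat x + g0 x) / (2 * g0 x)) ∂Pn
            - ∫ x, Real.log ((ghat x + g0 x) / (2 * g0 x)) ∂P)
        + lam / 2 * (I g0) ^ 2 := by
  obtain ⟨hg0Q, hg0Qn, hlogg0Pn, -, -, -⟩ := hint g0 hg0G
  obtain ⟨hghatQ, hghatQn, hlogghatPn, hlogP, hlogPn, hsqQ⟩ := hint ghat hghatG
  have hg0pos : ∀ x, 0 < g0 x := hpos g0 hg0G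
  have hghatpos : ∀ x, 0 < ghat x := hpos ghat hghatG
  set L : X → ℝ := fun x => Real.log ((ghat x + g0 x) / (2 * g0 x)) with hL
  -- rewrite the P-integral as a Q-integral with density g0
  have hf : Measurable (fun x => (g0 x).toNNReal) := hg0m.real_toNNReal
  have hPd : P = Q.withDensity (fun x => ((g0 x).toNNReal : ℝ≥0∞)) := by
    rw [hP]; rfl
  have hsmul_eq : ∀ x, (g0 x).toNNReal • L x = g0 x * L x := by
    intro x
    rw [NNReal.smul_def, Real.coe_toNNReal _ (hg0pos x).le, smul_eq_mul]
  have hBrw : ∫ x, L x ∂P = ∫ x, g0 x * L x ∂Q := by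
    rw [hPd, integral_withDensity_eq_integral_smul hf]
    exact integral_congr_ae (Filter.Eventually.of_forall hsmul_eq)
  have hg0L_int : Integrable (fun x => g0 x * L x) Q := by
    have := (integrable_withDensity_iff_integrable_smul hf (g := L)).1 (by rwa [hPd] at hlogP)
    exact this.congr (Filter.Eventually.of_forall hsmul_eq)
  -- Step A: empirical inequality
  have hA := hopt g0 hg0G
  have hlogmono : ∫ x, Real.log (ghat x) ∂Pn ≤ ∫ x, (2 * L x + Real.log (g0 x)) ∂Pn := by
    refine integral_mono hlogghatPn ((hlogPn.const_mul 2).add hlogg0Pn) fun x => ?_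
    exact pt_emp_aux (g0 x) (ghat x) (hg0pos x) (hghatpos x)
  rw [integral_add (hlogPn.const_mul 2) hlogg0Pn, integral_const_mul] at hlogmono
  have hQnsub : ∫ x, (ghat x - g0 x) ∂Qn = ∫ x, ghat x ∂Qn - ∫ x, g0 x ∂Qn :=
    integral_sub hghatQn hg0Qn
  have stepA : lam / 2 * (I ghat) ^ 2
      ≤ -(∫ x, (ghat x - g0 x) ∂Qn) + 2 * ∫ x, L x ∂Pn + lam / 2 * (I g0) ^ 2 := by
    rw [hQnsub]; linarith
  -- Step B: population inequality
  have hptB : ∀ x, (1/8) * (Real.sqrt (g0 x) - Real.sqrt (ghat x)) ^ 2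
      ≤ (ghat x - g0 x) - 2 * (g0 x * L x) := fun x =>
    pt_pop_aux (g0 x) (ghat x) (hg0pos x) (hghatpos x)
  have hdiffQ : Integrable (fun x => ghat x - g0 x) Q := hghatQ.sub hg0Q
  have hBmono : ∫ x, (1/8) * (Real.sqrt (g0 x) - Real.sqrt (ghat x)) ^ 2 ∂Q
      ≤ ∫ x, ((ghat x - g0 x) - 2 * (g0 x * L x)) ∂Q := by
    refine integral_mono (hsqQ.const_mul _) (hdiffQ.sub (hg0L_int.const_mul 2)) hptB
  have hsplit : ∫ x, ((ghat x - g0 x) - 2 * (g0 x * L x)) ∂Q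
      = (∫ x, (ghat x - g0 x) ∂Q) - ∫ x, 2 * (g0 x * L x) ∂Q :=
    integral_sub hdiffQ (hg0L_int.const_mul 2)
  rw [integral_const_mul, hsplit, integral_const_mul] at hBmono
  have stepB : (1/8) * ∫ x, (Real.sqrt (g0 x) - Real.sqrt (ghat x)) ^ 2 ∂Q
      ≤ ∫ x, (ghat x - g0 x) ∂Q - 2 * ∫ x, L x ∂P := by
    rw [hBrw]
    exact hBmono
  linarith
end

section
/- Let ĝₙ be the empirical maximizer defining estimator E1 with g₀ ∈ G, and consider the midpoint (ĝₙ+g₀)/2. Then (1/8) h_Q²(g₀, ĝₙ) ≤ 2 h_Q²(g₀, (g₀+ĝₙ)/2) ≤ −∫ ((ĝₙ − g₀)/2) d(Qₙ − Q) + ∫ log((ĝₙ + g₀)/(2g₀)) d(Pₙ − P). -/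
open MeasureTheory Real
open scoped NNReal ENNReal

lemma aux1 (a b : ℝ) (ha : 0 < a) (hb : 0 < b) :
    (Real.sqrt a - Real.sqrt b) ^ 2 ≤ 16 * (Real.sqrt a - Real.sqrt ((a + b) / 2)) ^ 2 := by
  set u := Real.sqrt a with hu'
  set v := Real.sqrt b with hv'
  set m := Real.sqrt ((a + b) / 2) with hm'
  have hu : u ^ 2 = a := Real.sq_sqrt ha.le
  have hv : v ^ 2 = b := Real.sq_sqrt hb.le
  have hm : m ^ 2 = (a + b) / 2 := Real.sq_sqrt (by positivity)
  have hu0 : 0 ≤ u := Real.sqrt_nonneg _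
  have hv0 : 0 < v := Real.sqrt_pos.2 hb
  have hm0 : 0 ≤ m := Real.sqrt_nonneg _
  have hub : m ≤ u + 2 * v := by nlinarith [mul_nonneg hu0 hv0.le]
  have key : (u - m) ^ 2 * (m + u) ^ 2 = (v - u) ^ 2 * (v + u) ^ 2 / 4 := by
    nlinarith [hu, hv, hm]
  have h2 : (v - u) ^ 2 * (v + u) ^ 2 ≤ 16 * (u - m) ^ 2 * (u + v) ^ 2 := by
    nlinarith [key, mul_nonneg (sq_nonneg (u - m)) (mul_nonneg (by linarith : (0:ℝ) ≤ 2 * (u + v) - (m + u)) (by positivity : (0:ℝ) ≤ 2 * (u + v) + (m + u)))]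
  nlinarith [h2, sq_nonneg (u + v), mul_pos (by linarith : (0:ℝ) < u + v) (by linarith : (0:ℝ) < u + v)]

lemma aux2 (a m : ℝ) (ha : 0 < a) (hm : 0 < m) :
    (Real.sqrt a - Real.sqrt m) ^ 2 ≤ (m - a) - a * Real.log (m / a) := by
  have ht : 0 < m / a := div_pos hm ha
  have hlog : Real.log (m / a) ≤ 2 * (Real.sqrt (m / a) - 1) := by
    have h1 := Real.log_le_sub_one_of_pos (Real.sqrt_pos.2 ht)
    have h2 : Real.log (Real.sqrt (m / a)) = Real.log (m / a) / 2 := Real.log_sqrt ht.le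
    linarith
  have h3 : Real.sqrt a * Real.sqrt (m / a) = Real.sqrt m := by
    rw [← Real.sqrt_mul ha.le]
    congr 1
    field_simp
  have hu : Real.sqrt a ^ 2 = a := Real.sq_sqrt ha.le
  have hv : Real.sqrt m ^ 2 = m := Real.sq_sqrt hm.le
  have h5 : a * Real.sqrt (m / a) = Real.sqrt a * Real.sqrt m := by
    linear_combination Real.sqrt a * h3 - Real.sqrt (m / a) * hu
  have h4 : a * Real.log (m / a) ≤ 2 * (Real.sqrt a * Real.sqrt m) - 2 * a := by
    have := mul_le_mul_of_nonneg_left hlog ha.le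
    nlinarith [h5]
  nlinarith [h4, hu, hv]

lemma aux3 (a b : ℝ) (ha : 0 < a) (hb : 0 < b) :
    (Real.log a - Real.log b) / 2 ≤ Real.log ((a + b) / (2 * b)) := by
  have h1 : (a + b) / (2 * b) = ((a + b) / 2) / b := by ring
  have h2 : Real.log (((a + b) / 2) / b) = Real.log ((a + b) / 2) - Real.log b :=
    Real.log_div (by positivity) (ne_of_gt hb)
  have hs : Real.sqrt a * Real.sqrt b ≤ (a + b) / 2 := by
    nlinarith [sq_nonneg (Real.sqrt a - Real.sqrt b), Real.sq_sqrt ha.le, Real.sq_sqrt hb.le]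
  have h3 : Real.log (Real.sqrt a * Real.sqrt b) ≤ Real.log ((a + b) / 2) :=
    Real.log_le_log (by positivity) hs
  have h4 : Real.log (Real.sqrt a * Real.sqrt b) = Real.log a / 2 + Real.log b / 2 := by
    rw [Real.log_mul (by positivity) (by positivity), Real.log_sqrt ha.le, Real.log_sqrt hb.le]
  rw [h1, h2]
  linarith



/-- For the empirical maximizer `ghat` of estimator E1 (with `g₀ = dP/dQ ∈ G`):
`(1/8) h_Q²(g₀, ghat) ≤ 2 h_Q²(g₀, (g₀+ghat)/2)
  ≤ −∫ ((ghat−g₀)/2) d(Qₙ−Q) + ∫ log((ghat+g₀)/(2g₀)) d(Pₙ−P)`. -/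
theorem estimator_E1_hellinger_inequality
    {X : Type*} [MeasurableSpace X] (Q : Measure X) [IsProbabilityMeasure Q]
    (g0 : X → ℝ) (hg0m : Measurable g0) (hg0pos : ∀ x, 0 < g0 x)
    (P : Measure X) (hP : P = Q.withDensity (fun x => ENNReal.ofReal (g0 x)))
    [IsProbabilityMeasure P]
    (Pn Qn : Measure X) [IsProbabilityMeasure Pn] [IsProbabilityMeasure Qn]
    (ghat : X → ℝ) (hghatm : Measurable ghat) (hghatpos : ∀ x, 0 < ghat x)
    -- ghat does at least as well as g₀ on the empirical objective:
    (hopt : ∫ x, ghat x ∂Qn - ∫ x, Real.log (ghat x) ∂Pn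
      ≤ ∫ x, g0 x ∂Qn - ∫ x, Real.log (g0 x) ∂Pn)
    -- integrability of the relevant integrands:
    (hint1 : Integrable ghat Q) (hint2 : Integrable g0 Q)
    (hint3 : Integrable ghat Qn) (hint4 : Integrable g0 Qn)
    (hint5 : Integrable (fun x => Real.log (ghat x)) Pn)
    (hint6 : Integrable (fun x => Real.log (g0 x)) Pn)
    (hint7 : Integrable (fun x => Real.log ((ghat x + g0 x) / (2 * g0 x))) P)
    (hint8 : Integrable (fun x => Real.log ((ghat x + g0 x) / (2 * g0 x))) Pn)
    (hint9 : Integrable (fun x => (Real.sqrt (g0 x) - Real.sqrt (ghat x)) ^ 2) Q)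
    (hint10 : Integrable
      (fun x => (Real.sqrt (g0 x) - Real.sqrt ((g0 x + ghat x) / 2)) ^ 2) Q) :
    (1 / 8) * ((1 / 2) * ∫ x, (Real.sqrt (g0 x) - Real.sqrt (ghat x)) ^ 2 ∂Q)
      ≤ 2 * ((1 / 2) * ∫ x, (Real.sqrt (g0 x) - Real.sqrt ((g0 x + ghat x) / 2)) ^ 2 ∂Q) ∧
    2 * ((1 / 2) * ∫ x, (Real.sqrt (g0 x) - Real.sqrt ((g0 x + ghat x) / 2)) ^ 2 ∂Q)
      ≤ -(∫ x, (ghat x - g0 x) / 2 ∂Qn - ∫ x, (ghat x - g0 x) / 2 ∂Q)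
        + (∫ x, Real.log ((ghat x + g0 x) / (2 * g0 x)) ∂Pn
            - ∫ x, Real.log ((ghat x + g0 x) / (2 * g0 x)) ∂P) := by
  constructor
  · -- Part 1
    have h := integral_mono hint9 (hint10.const_mul 16)
      (fun x => aux1 (g0 x) (ghat x) (hg0pos x) (hghatpos x))
    rw [integral_const_mul] at h
    linarith
  · -- Part 2
    set An := ∫ x, (ghat x - g0 x) / 2 ∂Qn with hAn'
    set A := ∫ x, (ghat x - g0 x) / 2 ∂Q with hA'
    set Bn := ∫ x, Real.log ((ghat x + g0 x) / (2 * g0 x)) ∂Pn with hBn'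
    set B := ∫ x, Real.log ((ghat x + g0 x) / (2 * g0 x)) ∂P with hB'
    -- step i : An ≤ Bn
    have hAncalc : An = (∫ x, ghat x ∂Qn - ∫ x, g0 x ∂Qn) / 2 := by
      rw [hAn', ← integral_sub hint3 hint4, ← integral_div]
    have hmidlog : ∫ x, (Real.log (ghat x) - Real.log (g0 x)) / 2 ∂Pn ≤ Bn :=
      integral_mono ((hint5.sub hint6).div_const 2) hint8
        (fun x => aux3 (ghat x) (g0 x) (hghatpos x) (hg0pos x))
    have hmidcalc : ∫ x, (Real.log (ghat x) - Real.log (g0 x)) / 2 ∂Pn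
        = (∫ x, Real.log (ghat x) ∂Pn - ∫ x, Real.log (g0 x) ∂Pn) / 2 := by
      rw [← integral_sub hint5 hint6, ← integral_div]
    have stepi : An ≤ Bn := by
      rw [hAncalc]
      rw [hmidcalc] at hmidlog
      linarith
    -- rewrite B as an integral over Q
    have hBQ : B = ∫ x, g0 x * Real.log ((ghat x + g0 x) / (2 * g0 x)) ∂Q := by
      have hdens : (fun x => ENNReal.ofReal (g0 x))
          = (fun x => (((g0 x).toNNReal : ℝ≥0) : ℝ≥0∞)) := rfl
      rw [hB', hP, hdens, integral_withDensity_eq_integral_smul hg0m.real_toNNReal]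
      congr 1
      ext x
      simp [NNReal.smul_def, Real.coe_toNNReal _ (hg0pos x).le]
    have hint7Q : Integrable (fun x => g0 x * Real.log ((ghat x + g0 x) / (2 * g0 x))) Q := by
      have : Integrable
          (fun x => (g0 x).toNNReal • Real.log ((ghat x + g0 x) / (2 * g0 x))) Q := by
        rw [← integrable_withDensity_iff_integrable_smul hg0m.real_toNNReal]
        exact hP ▸ hint7
      refine this.congr (Filter.Eventually.of_forall fun x => ?_)
      simp [NNReal.smul_def, Real.coe_toNNReal _ (hg0pos x).le]
    -- step ii : ∫ (√g0 - √mid)^2 dQ ≤ A - B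
    have hf1 : Integrable (fun x => (ghat x - g0 x) / 2) Q := (hint1.sub hint2).div_const 2
    have hptwise : ∀ x, (Real.sqrt (g0 x) - Real.sqrt ((g0 x + ghat x) / 2)) ^ 2
        ≤ (ghat x - g0 x) / 2 - g0 x * Real.log ((ghat x + g0 x) / (2 * g0 x)) := by
      intro x
      have h := aux2 (g0 x) ((g0 x + ghat x) / 2) (hg0pos x) (by have := hghatpos x; have := hg0pos x; linarith)
      have heq : (g0 x + ghat x) / 2 / g0 x = (ghat x + g0 x) / (2 * g0 x) := by
        field_simp; ring
      rw [heq] at h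
      linarith
    have stepii : ∫ x, (Real.sqrt (g0 x) - Real.sqrt ((g0 x + ghat x) / 2)) ^ 2 ∂Q ≤ A - B := by
      have h := integral_mono
        (g := fun x => (ghat x - g0 x) / 2 - g0 x * Real.log ((ghat x + g0 x) / (2 * g0 x)))
        hint10 (hf1.sub hint7Q) hptwise
      rw [integral_sub hf1 hint7Q] at h
      rw [hBQ]
      exact h
    linarith
end

section
/- Csiszár's inequality: for probability measures P ≪ Q with densities p₀, q₀, ∫ p₀ |log(p₀/q₀)| dμ ≤ D_K(P,Q) + 4 √(D_K(P,Q)), where D_K(P,Q) = ∫ p₀ log(p₀/q₀) dμ. -/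
open MeasureTheory Real

private lemma csiszar_log_le {u : ℝ} (hu : 0 < u) : Real.log u ≤ 2 * (Real.sqrt u - 1) := by
  have h := Real.log_le_sub_one_of_pos (Real.sqrt_pos.2 hu)
  rw [Real.log_sqrt hu.le] at h; linarith

private lemma csiszar_master {a b : ℝ} (ha : 0 ≤ a) (hb : 0 ≤ b) (h0 : b = 0 → a = 0) :
    (Real.sqrt a - Real.sqrt b) ^ 2 + a * max (-(Real.log (a / b))) 0
      ≤ a * max (Real.log (a / b)) 0 + b - a := by
  rcases eq_or_lt_of_le ha with h | hapos
  · rw [← h]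
    simp [Real.sq_sqrt hb]
  · have hbpos : 0 < b := lt_of_le_of_ne hb fun h => absurd (h0 h.symm) (by linarith)
    have hsa := Real.sqrt_pos.2 hapos
    have key : 2 * a - 2 * Real.sqrt a * Real.sqrt b ≤ a * Real.log (a / b) := by
      have h1 := csiszar_log_le (div_pos hbpos hapos)
      have h2 : Real.sqrt (b / a) = Real.sqrt b / Real.sqrt a := Real.sqrt_div hb a
      have h3 : Real.log (b / a) = -(Real.log (a / b)) := by
        rw [Real.log_div hbpos.ne' hapos.ne', Real.log_div hapos.ne' hbpos.ne']; ring
      rw [h2, h3] at h1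
      have hmul : Real.sqrt a * Real.sqrt a = a := Real.mul_self_sqrt ha
      have h4 : a * (Real.sqrt b / Real.sqrt a) = Real.sqrt a * Real.sqrt b := by
        field_simp
        linear_combination -hmul
      nlinarith [mul_le_mul_of_nonneg_left h1 ha]
    have hML : a * max (Real.log (a / b)) 0 - a * max (-(Real.log (a / b))) 0
        = a * Real.log (a / b) := by
      rw [← mul_sub, max_zero_sub_eq_self]
    have hsq : (Real.sqrt a - Real.sqrt b) ^ 2
        = a - 2 * Real.sqrt a * Real.sqrt b + b := by
      have := Real.sq_sqrt ha; have := Real.sq_sqrt hb; ring_nf; nlinarith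
    linarith

private lemma csiszar_neg_bound {a b : ℝ} (ha : 0 ≤ a) (hb : 0 ≤ b) (h0 : b = 0 → a = 0) :
    a * max (-(Real.log (a / b))) 0
      ≤ 2 * (Real.sqrt a * |Real.sqrt a - Real.sqrt b|) := by
  have hR : 0 ≤ 2 * (Real.sqrt a * |Real.sqrt a - Real.sqrt b|) := by positivity
  rcases eq_or_lt_of_le ha with h | hapos
  · rw [← h, zero_mul]; positivity
  · have hbpos : 0 < b := lt_of_le_of_ne hb fun h => absurd (h0 h.symm) (by linarith)
    have hsa := Real.sqrt_pos.2 hapos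
    have h3 : -(Real.log (a / b)) = Real.log (b / a) := by
      rw [Real.log_div hbpos.ne' hapos.ne', Real.log_div hapos.ne' hbpos.ne']; ring
    have h1 := csiszar_log_le (div_pos hbpos hapos)
    have h2 : Real.sqrt (b / a) = Real.sqrt b / Real.sqrt a := Real.sqrt_div hb a
    rw [h2] at h1
    have hmul : Real.sqrt a * Real.sqrt a = a := Real.mul_self_sqrt ha
    have h4 : a * (Real.sqrt b / Real.sqrt a) = Real.sqrt a * Real.sqrt b := by
      field_simp
      linear_combination -hmul
    have hkey : a * Real.log (b / a) ≤ 2 * Real.sqrt a * Real.sqrt b - 2 * a := by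
      nlinarith [mul_le_mul_of_nonneg_left h1 ha]
    have habs : Real.sqrt b - Real.sqrt a ≤ |Real.sqrt a - Real.sqrt b| := by
      rw [abs_sub_comm]; exact le_abs_self _
    rw [h3]
    rcases le_or_gt (Real.log (b / a)) 0 with hL | hL
    · rw [max_eq_right hL, mul_zero]; exact hR
    · rw [max_eq_left hL.le]
      calc a * Real.log (b / a) ≤ 2 * Real.sqrt a * Real.sqrt b - 2 * a := hkey
        _ = 2 * (Real.sqrt a * (Real.sqrt b - Real.sqrt a)) := by
            nlinarith [Real.sq_sqrt ha]
        _ ≤ 2 * (Real.sqrt a * |Real.sqrt a - Real.sqrt b|) := by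
            have := mul_le_mul_of_nonneg_left habs (Real.sqrt_nonneg a)
            linarith

/-- Csiszár's inequality: for `P ≪ Q` with densities `p₀, q₀` w.r.t. `μ`,
`∫ p₀ |log(p₀/q₀)| dμ ≤ D_K(P,Q) + 4 √(D_K(P,Q))`; in particular the
log-likelihood ratio is `P`-integrable whenever `D_K(P,Q) < ∞`. -/
theorem csiszar_inequality
    {X : Type*} [MeasurableSpace X] (μ : Measure X) [SigmaFinite μ]
    (P Q : Measure X) [IsProbabilityMeasure P] [IsProbabilityMeasure Q]
    (p q : X → ℝ) (hpmeas : Measurable p) (hqmeas : Measurable q)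
    (hp : ∀ x, 0 ≤ p x) (hq : ∀ x, 0 ≤ q x)
    (hP : P = μ.withDensity (fun x => ENNReal.ofReal (p x)))
    (hQ : Q = μ.withDensity (fun x => ENNReal.ofReal (q x)))
    (hPQ : P ≪ Q)
    -- D_K(P,Q) < ∞: the positive part of p₀ log(p₀/q₀) is integrable
    (hDfin : Integrable (fun x => p x * max (Real.log (p x / q x)) 0) μ) :
    Integrable (fun x => p x * |Real.log (p x / q x)|) μ ∧
    ∫ x, p x * |Real.log (p x / q x)| ∂μ
      ≤ (∫ x, p x * Real.log (p x / q x) ∂μ)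
        + 4 * Real.sqrt (∫ x, p x * Real.log (p x / q x) ∂μ) := by
  have hLmeas : Measurable fun x => Real.log (p x / q x) :=
    (hpmeas.div hqmeas).log
  -- a.e., q x = 0 → p x = 0
  have hqm : MeasurableSet {x | q x = 0} := hqmeas (measurableSet_singleton 0)
  have hq0 : ∀ᵐ x ∂μ, q x = 0 → p x = 0 := by
    have hQ0 : Q {x | q x = 0} = 0 := by
      rw [hQ, withDensity_apply _ hqm]
      calc ∫⁻ x in {x | q x = 0}, ENNReal.ofReal (q x) ∂μ
          = ∫⁻ _ in {x | q x = 0}, (0 : ENNReal) ∂μ :=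
            setLIntegral_congr_fun hqm (fun x hx => by
              rw [Set.mem_setOf_eq] at hx; simp [hx])
        _ = 0 := lintegral_zero
    have hP0 : P {x | q x = 0} = 0 := hPQ hQ0
    rw [hP, withDensity_apply _ hqm] at hP0
    have h1 := (lintegral_eq_zero_iff hpmeas.ennreal_ofReal).mp hP0
    have h2 := (ae_restrict_iff' hqm).mp h1
    filter_upwards [h2] with x hx hqx
    have := hx hqx
    simp only [Pi.zero_apply, ENNReal.ofReal_eq_zero] at this
    exact le_antisymm this (hp x)
  -- integrals of p and q are 1
  have hlp : ∫⁻ x, ENNReal.ofReal (p x) ∂μ = 1 := by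
    have := measure_univ (μ := P)
    rwa [hP, withDensity_apply _ MeasurableSet.univ, setLIntegral_univ] at this
  have hlq : ∫⁻ x, ENNReal.ofReal (q x) ∂μ = 1 := by
    have := measure_univ (μ := Q)
    rwa [hQ, withDensity_apply _ MeasurableSet.univ, setLIntegral_univ] at this
  have hint_p : Integrable p μ := by
    refine ⟨hpmeas.aestronglyMeasurable, ?_⟩
    rw [hasFiniteIntegral_iff_ofReal (Filter.Eventually.of_forall hp), hlp]
    exact ENNReal.one_lt_top
  have hint_q : Integrable q μ := by
    refine ⟨hqmeas.aestronglyMeasurable, ?_⟩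
    rw [hasFiniteIntegral_iff_ofReal (Filter.Eventually.of_forall hq), hlq]
    exact ENNReal.one_lt_top
  have hip : ∫ x, p x ∂μ = 1 := by
    rw [integral_eq_lintegral_of_nonneg_ae (Filter.Eventually.of_forall hp)
      hpmeas.aestronglyMeasurable, hlp]; simp
  have hiq : ∫ x, q x ∂μ = 1 := by
    rw [integral_eq_lintegral_of_nonneg_ae (Filter.Eventually.of_forall hq)
      hqmeas.aestronglyMeasurable, hlq]; simp
  -- notation
  set S : X → ℝ := fun x => (Real.sqrt (p x) - Real.sqrt (q x)) ^ 2 with hS_def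
  set N : X → ℝ := fun x => p x * max (-(Real.log (p x / q x))) 0 with hN_def
  have hSmeas : Measurable S := ((hpmeas.sqrt.sub hqmeas.sqrt).pow_const 2)
  have hNmeas : Measurable N := hpmeas.mul (hLmeas.neg.max measurable_const)
  have hN_nonneg : ∀ x, 0 ≤ N x := fun x => mul_nonneg (hp x) (le_max_right _ _)
  have hS_nonneg : ∀ x, 0 ≤ S x := fun x => sq_nonneg _
  -- master pointwise inequality
  have hmaster : ∀ᵐ x ∂μ, S x + N x
      ≤ p x * max (Real.log (p x / q x)) 0 + q x - p x := by
    filter_upwards [hq0] with x h0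
    exact csiszar_master (hp x) (hq x) h0
  have hRHSint : Integrable (fun x => p x * max (Real.log (p x / q x)) 0 + q x - p x) μ :=
    (hDfin.add hint_q).sub hint_p
  have hSN_int : Integrable (fun x => S x + N x) μ := by
    refine Integrable.mono' hRHSint (hSmeas.add hNmeas).aestronglyMeasurable ?_
    filter_upwards [hmaster] with x hx
    rw [Real.norm_of_nonneg (add_nonneg (hS_nonneg x) (hN_nonneg x))]
    exact hx
  have hS_int : Integrable S μ := by
    refine Integrable.mono' hSN_int hSmeas.aestronglyMeasurable ?_
    refine Filter.Eventually.of_forall fun x => ?_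
    rw [Real.norm_of_nonneg (hS_nonneg x)]
    linarith [hN_nonneg x]
  have hN_int : Integrable N μ := by
    refine Integrable.mono' hSN_int hNmeas.aestronglyMeasurable ?_
    refine Filter.Eventually.of_forall fun x => ?_
    rw [Real.norm_of_nonneg (hN_nonneg x)]
    linarith [hS_nonneg x]
  -- first conjunct
  have habs : (fun x => p x * |Real.log (p x / q x)|)
      = fun x => p x * max (Real.log (p x / q x)) 0 + N x := by
    funext x
    show p x * |Real.log (p x / q x)|
        = p x * max (Real.log (p x / q x)) 0 + p x * max (-(Real.log (p x / q x))) 0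
    rw [← mul_add, max_zero_add_max_neg_zero_eq_abs_self]
  have hAbsInt : Integrable (fun x => p x * |Real.log (p x / q x)|) μ := by
    rw [habs]; exact hDfin.add hN_int
  refine ⟨hAbsInt, ?_⟩
  -- integral identities
  have hD_eq : ∫ x, p x * Real.log (p x / q x) ∂μ
      = (∫ x, p x * max (Real.log (p x / q x)) 0 ∂μ) - ∫ x, N x ∂μ := by
    rw [← integral_sub hDfin hN_int]
    refine integral_congr_ae (Filter.Eventually.of_forall fun x => ?_)
    show p x * Real.log (p x / q x)
        = p x * max (Real.log (p x / q x)) 0 - p x * max (-(Real.log (p x / q x))) 0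
    rw [← mul_sub, max_zero_sub_eq_self]
  have hAbs_eq : ∫ x, p x * |Real.log (p x / q x)| ∂μ
      = (∫ x, p x * max (Real.log (p x / q x)) 0 ∂μ) + ∫ x, N x ∂μ := by
    rw [habs, integral_add hDfin hN_int]
  -- Hellinger bound : ∫ S ≤ D
  have hSD : ∫ x, S x ∂μ ≤ ∫ x, p x * Real.log (p x / q x) ∂μ := by
    have h1 : ∫ x, (S x + N x) ∂μ
        ≤ ∫ x, (p x * max (Real.log (p x / q x)) 0 + q x - p x) ∂μ :=
      integral_mono_ae hSN_int hRHSint hmaster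
    have hPQint : Integrable (fun x => p x * max (Real.log (p x / q x)) 0 + q x) μ :=
      hDfin.add hint_q
    rw [integral_add hS_int hN_int, integral_sub hPQint hint_p,
      integral_add hDfin hint_q, hip, hiq] at h1
    rw [hD_eq]
    linarith
  have hS0 : 0 ≤ ∫ x, S x ∂μ := integral_nonneg hS_nonneg
  have hN0 : 0 ≤ ∫ x, N x ∂μ := integral_nonneg hN_nonneg
  -- Cauchy-Schwarz: ∫ N ≤ 2 √(∫ S)
  have hNle : ∫ x, N x ∂μ ≤ 2 * Real.sqrt (∫ x, S x ∂μ) := by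
    have hf2 : MemLp (fun x => Real.sqrt (p x)) 2 μ := by
      refine (memLp_two_iff_integrable_sq hpmeas.sqrt.aestronglyMeasurable).2 ?_
      refine hint_p.congr (Filter.Eventually.of_forall fun x => ?_)
      show p x = Real.sqrt (p x) ^ 2
      rw [Real.sq_sqrt (hp x)]
    have hg2 : MemLp (fun x => |Real.sqrt (p x) - Real.sqrt (q x)|) 2 μ := by
      refine (memLp_two_iff_integrable_sq
        (hpmeas.sqrt.sub hqmeas.sqrt).abs.aestronglyMeasurable).2 ?_
      refine hS_int.congr (Filter.Eventually.of_forall fun x => ?_)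
      show S x = |Real.sqrt (p x) - Real.sqrt (q x)| ^ 2
      rw [sq_abs]
    have hconj : Real.HolderConjugate 2 2 := Real.HolderConjugate.two_two
    have hprod_int : Integrable
        (fun x => Real.sqrt (p x) * |Real.sqrt (p x) - Real.sqrt (q x)|) μ := by
      rw [← memLp_one_iff_integrable]
      have := hf2.smul (p := 2) (q := 2) (r := 1) hg2 (hpqr := ⟨by simp [ENNReal.inv_two_add_inv_two]⟩)
      simpa [smul_eq_mul, mul_comm, Pi.mul_def] using this
    have hCS := integral_mul_le_Lp_mul_Lq_of_nonneg hconj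
      (Filter.Eventually.of_forall fun x => Real.sqrt_nonneg (p x))
      (Filter.Eventually.of_forall fun x => abs_nonneg _)
      (by simpa using hf2) (by simpa using hg2)
    have hCS' : ∫ x, Real.sqrt (p x) * |Real.sqrt (p x) - Real.sqrt (q x)| ∂μ
        ≤ Real.sqrt (∫ x, S x ∂μ) := by
      have hr : ∀ y : ℝ, y ^ (2 : ℝ) = y ^ 2 := fun y => by
        rw [← Real.rpow_natCast y 2]; norm_num
      have e1 : ∫ x, Real.sqrt (p x) ^ (2 : ℝ) ∂μ = 1 := by
        have e1' : ∫ x, Real.sqrt (p x) ^ (2 : ℝ) ∂μ = ∫ x, p x ∂μ := by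
          refine integral_congr_ae (Filter.Eventually.of_forall fun x => ?_)
          show Real.sqrt (p x) ^ (2 : ℝ) = p x
          rw [hr, Real.sq_sqrt (hp x)]
        rw [e1', hip]
      have e2 : ∫ x, |Real.sqrt (p x) - Real.sqrt (q x)| ^ (2 : ℝ) ∂μ = ∫ x, S x ∂μ := by
        refine integral_congr_ae (Filter.Eventually.of_forall fun x => ?_)
        show |Real.sqrt (p x) - Real.sqrt (q x)| ^ (2 : ℝ) = S x
        rw [hr, sq_abs]
      beta_reduce at hCS
      rw [e1, e2] at hCS
      calc ∫ x, Real.sqrt (p x) * |Real.sqrt (p x) - Real.sqrt (q x)| ∂μ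
          ≤ (1 : ℝ) ^ (1/2 : ℝ) * (∫ x, S x ∂μ) ^ (1/2 : ℝ) := hCS
        _ = Real.sqrt (∫ x, S x ∂μ) := by
            rw [Real.one_rpow, one_mul, ← Real.sqrt_eq_rpow]
    have hmono : ∫ x, N x ∂μ
        ≤ ∫ x, 2 * (Real.sqrt (p x) * |Real.sqrt (p x) - Real.sqrt (q x)|) ∂μ := by
      refine integral_mono_ae hN_int (hprod_int.const_mul 2) ?_
      filter_upwards [hq0] with x h0
      exact csiszar_neg_bound (hp x) (hq x) h0
    rw [integral_const_mul] at hmono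
    calc ∫ x, N x ∂μ ≤ 2 * ∫ x, Real.sqrt (p x) * |Real.sqrt (p x) - Real.sqrt (q x)| ∂μ :=
          hmono
      _ ≤ 2 * Real.sqrt (∫ x, S x ∂μ) := by linarith
  -- finish
  have hsqrt : Real.sqrt (∫ x, S x ∂μ)
      ≤ Real.sqrt (∫ x, p x * Real.log (p x / q x) ∂μ) := Real.sqrt_le_sqrt hSD
  rw [hAbs_eq]
  linarith [hD_eq]
end

section
/- Let f̂ₙ maximize over a class F the map f ↦ ∫ f dQₙ − ∫ φ*(f) dPₙ, assume f₀ = ∂φ(q₀/p₀) ∈ F (so that D_φ(P,Q) = ∫ f₀ dQ − ∫ φ*(f₀) dP). Then the Bregman distance d_φ(f₀, f̂ₙ) := D_φ(P,Q) − (∫ f̂ₙ dQ − ∫ φ*(f̂ₙ) dP) satisfies d_φ(f₀, f̂ₙ) ≤ sup_{f ∈ F} |∫ (φ*(f) − φ*(f₀)) d(Pₙ − P) − ∫ (f − f₀) d(Qₙ − Q)|. -/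
open MeasureTheory Real

/-- General f-divergence version of the basic inequality: if `fhat` maximizes
`f ↦ ∫ f dQₙ − ∫ φ*(f) dPₙ` over `F ∋ f₀`, where
`D_φ(P,Q) = ∫ f₀ dQ − ∫ φ*(f₀) dP`, then the Bregman distance
`d_φ(f₀, fhat) = D_φ(P,Q) − (∫ fhat dQ − ∫ φ*(fhat) dP)` satisfies
`d_φ(f₀, fhat) ≤ sup_{f ∈ F} |∫ (φ*(f) − φ*(f₀)) d(Pₙ−P) − ∫ (f − f₀) d(Qₙ−Q)|`. -/
theorem general_fdivergence_basic_inequality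
    {X : Type*} [MeasurableSpace X]
    (P Q Pn Qn : Measure X) [IsProbabilityMeasure P] [IsProbabilityMeasure Q]
    [IsProbabilityMeasure Pn] [IsProbabilityMeasure Qn]
    (φstar : ℝ → ℝ)
    (F : Set (X → ℝ)) (f0 : X → ℝ) (hf0F : f0 ∈ F)
    (fhat : X → ℝ) (hfhatF : fhat ∈ F)
    -- fhat maximizes the empirical objective over F:
    (hopt : ∀ f ∈ F, ∫ x, f x ∂Qn - ∫ x, φstar (f x) ∂Pn
      ≤ ∫ x, fhat x ∂Qn - ∫ x, φstar (fhat x) ∂Pn)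
    -- the empirical process indexed by F:
    (E : (X → ℝ) → ℝ)
    (hE : E = fun f =>
      |(∫ x, (φstar (f x) - φstar (f0 x)) ∂Pn - ∫ x, (φstar (f x) - φstar (f0 x)) ∂P)
        - (∫ x, (f x - f0 x) ∂Qn - ∫ x, (f x - f0 x) ∂Q)|)
    (hbdd : BddAbove (Set.range fun f : F => E f))
    -- integrability of the relevant integrands:
    (hint : ∀ f ∈ F, Integrable f Q ∧ Integrable f Qn ∧
      Integrable (fun x => φstar (f x)) P ∧ Integrable (fun x => φstar (f x)) Pn) :
    (∫ x, f0 x ∂Q - ∫ x, φstar (f0 x) ∂P)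
      - (∫ x, fhat x ∂Q - ∫ x, φstar (fhat x) ∂P)
      ≤ ⨆ f : F, E f := by
  obtain ⟨h1, h2, h3, h4⟩ := hint f0 hf0F
  obtain ⟨g1, g2, g3, g4⟩ := hint fhat hfhatF
  have hopt0 := hopt f0 hf0F
  have key : (∫ x, f0 x ∂Q - ∫ x, φstar (f0 x) ∂P)
      - (∫ x, fhat x ∂Q - ∫ x, φstar (fhat x) ∂P) ≤ E fhat := by
    subst hE
    simp only
    rw [integral_sub g4 h4, integral_sub g3 h3, integral_sub g2 h2, integral_sub g1 h1]
    refine le_trans ?_ (neg_le_abs _)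
    linarith
  exact key.trans (le_ciSup hbdd ⟨fhat, hfhatF⟩)
end
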